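/- arXiv:2104.14666 — 6 statements merged into one kernel-verified Lean document; each statement's English description precedes it below -/
import Mathlib

section
/- Let η ∈ ℝ, let I : ℝ → ℝ be continuous, and let θ : (t₁,t₂) → ℝ be differentiable with θ'(t) = 1 − cos θ(t) + (1 + cos θ(t))·(η + I(t)) and cos θ(t) ≠ −1 for all t ∈ (t₁,t₂). Then the function V(t) := tan(θ(t)/2) is differentiable on (t₁,t₂) and satisfies V'(t) = η + I(t) + V(t)². (A theta neuron is equivalent under V = tan(θ/2) to a quadratic integrate-and-fire neuron.) -/
/-- A theta neuron `θ' = 1 - cos θ + (1 + cos θ)(η + I(t))` with `cos θ ≠ -1`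
is equivalent under `V = tan(θ/2)` to a quadratic integrate-and-fire neuron
`V' = η + I(t) + V²`. -/
theorem theta_to_qif (η t₁ t₂ : ℝ) (I : ℝ → ℝ) (hI : Continuous I)
    (θ : ℝ → ℝ)
    (hθ : ∀ t ∈ Set.Ioo t₁ t₂,
      HasDerivAt θ (1 - Real.cos (θ t) + (1 + Real.cos (θ t)) * (η + I t)) t)
    (hcos : ∀ t ∈ Set.Ioo t₁ t₂, Real.cos (θ t) ≠ -1) :
    ∀ t ∈ Set.Ioo t₁ t₂,
      HasDerivAt (fun s => Real.tan (θ s / 2))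
        (η + I t + (Real.tan (θ t / 2)) ^ 2) t := by
  intro t ht
  have key : Real.cos (θ t / 2) ^ 2 = 1 / 2 + Real.cos (θ t) / 2 := by
    have := Real.cos_sq (θ t / 2)
    rwa [show 2 * (θ t / 2) = θ t by ring] at this
  have hc : Real.cos (θ t / 2) ≠ 0 := by
    intro h
    apply hcos t ht
    rw [h] at key
    nlinarith [key]
  have hcosθ : Real.cos (θ t) = 2 * Real.cos (θ t / 2) ^ 2 - 1 := by nlinarith [key]
  have hsin : Real.sin (θ t / 2) ^ 2 = 1 - Real.cos (θ t / 2) ^ 2 := by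
    nlinarith [Real.sin_sq_add_cos_sq (θ t / 2)]
  have h1 : HasDerivAt (fun s => θ s / 2)
      ((1 - Real.cos (θ t) + (1 + Real.cos (θ t)) * (η + I t)) / 2) t :=
    (hθ t ht).div_const 2
  have h2 : HasDerivAt Real.tan (1 / Real.cos (θ t / 2) ^ 2) (θ t / 2) := Real.hasDerivAt_tan hc
  have h3 := h2.comp t h1
  refine h3.congr_deriv ?_; symm
  rw [Real.tan_eq_sin_div_cos]
  field_simp
  rw [hcosθ, hsin]; ring
end

section
/- Let a > 0 and let θ : ℝ → ℝ be a (global) solution of θ'(t) = 1 − cos θ(t) + (1 + cos θ(t))·a. Then for all t ∈ ℝ, θ(t + π/√a) = θ(t) + 2π. (Every theta neuron trajectory with constant positive input a advances by exactly one full revolution in time π/√a, i.e. it fires with frequency √a/π.) -/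
open Real

/-- Smooth global antiderivative of `1 / ((1+s²) - (1-s²) cos x)`. -/
noncomputable def thetaG (s x : ℝ) : ℝ :=
  (x + 2 * Real.arctan ((1 - s) * Real.sin x / ((1 + s) - (1 - s) * Real.cos x))) / (2 * s)

lemma thetaD_pos {s : ℝ} (hs : 0 < s) (x : ℝ) :
    0 < (1 + s) - (1 - s) * Real.cos x := by
  have h1 := Real.neg_one_le_cos x
  have h2 := Real.cos_le_one x
  nlinarith [mul_nonneg hs.le (by linarith : (0:ℝ) ≤ 1 + Real.cos x),
    mul_nonneg hs.le (by linarith : (0:ℝ) ≤ 1 - Real.cos x)]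

lemma thetaF_pos {s : ℝ} (hs : 0 < s) (x : ℝ) :
    0 < (1 + s ^ 2) - (1 - s ^ 2) * Real.cos x := by
  have h1 := Real.neg_one_le_cos x
  have h2 := Real.cos_le_one x
  nlinarith [mul_nonneg (sq_nonneg s) (by linarith : (0:ℝ) ≤ 1 + Real.cos x),
    mul_nonneg (sq_nonneg s) (by linarith : (0:ℝ) ≤ 1 - Real.cos x), sq_nonneg s]

lemma thetaG_hasDerivAt {s : ℝ} (hs : 0 < s) (x : ℝ) :
    HasDerivAt (thetaG s) (1 / ((1 + s ^ 2) - (1 - s ^ 2) * Real.cos x)) x := by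
  have hD := thetaD_pos hs x
  have hF := thetaF_pos hs x
  have hN : HasDerivAt (fun x => (1 - s) * Real.sin x) ((1 - s) * Real.cos x) x :=
    (Real.hasDerivAt_sin x).const_mul _
  have hDd : HasDerivAt (fun x => (1 + s) - (1 - s) * Real.cos x) ((1 - s) * Real.sin x) x := by
    have := ((Real.hasDerivAt_cos x).const_mul (1 - s)).const_sub (1 + s)
    simpa using this
  have hq := hN.div hDd hD.ne'
  have harctan := hq.arctan
  have hsum := ((hasDerivAt_id x).add (harctan.const_mul 2)).div_const (2 * s)
  refine hsum.congr_deriv (Eq.symm ?_)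
  have hsc := Real.sin_sq_add_cos_sq x
  have h1q : 0 < 1 + ((1 - s) * Real.sin x / ((1 + s) - (1 - s) * Real.cos x)) ^ 2 := by
    positivity
  simp only [Pi.div_apply]
  have hD0 := hD.ne'
  have hF0 := hF.ne'
  have hs0 := hs.ne'
  have e1 : 1 + ((1 - s) * Real.sin x / ((1 + s) - (1 - s) * Real.cos x)) ^ 2
      = 2 * ((1 + s ^ 2) - (1 - s ^ 2) * Real.cos x) / ((1 + s) - (1 - s) * Real.cos x) ^ 2 := by
    rw [div_pow, mul_pow, show Real.sin x ^ 2 = 1 - Real.cos x ^ 2 by linarith]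
    field_simp
    ring
  have e2 : (1 - s) * Real.cos x * ((1 + s) - (1 - s) * Real.cos x)
      - (1 - s) * Real.sin x * ((1 - s) * Real.sin x)
      = (1 - s ^ 2) * Real.cos x - (1 - s) ^ 2 := by
    linear_combination (-(1 - s) ^ 2) * hsc
  rw [e1, e2]
  generalize (1 + s) - (1 - s) * Real.cos x = D at hD0 ⊢
  field_simp
  ring

lemma thetaG_strictMono {s : ℝ} (hs : 0 < s) : StrictMono (thetaG s) := by
  apply strictMono_of_deriv_pos
  intro x
  rw [(thetaG_hasDerivAt hs x).deriv]
  exact one_div_pos.mpr (thetaF_pos hs x)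

lemma thetaG_add_two_pi {s : ℝ} (hs : 0 < s) (x : ℝ) :
    thetaG s (x + 2 * Real.pi) = thetaG s x + Real.pi / s := by
  unfold thetaG
  rw [Real.sin_add_two_pi, Real.cos_add_two_pi]
  field_simp
  ring

/-- Every global solution of the theta neuron equation
`θ' = 1 - cos θ + (1 + cos θ)·a` with constant input `a > 0` advances by exactly
`2π` in time `π/√a`: the neuron fires periodically with frequency `√a/π`. -/
theorem theta_neuron_firing_period (a : ℝ) (ha : 0 < a) (θ : ℝ → ℝ)
    (hθ : ∀ t : ℝ,
      HasDerivAt θ (1 - Real.cos (θ t) + (1 + Real.cos (θ t)) * a) t) :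
    ∀ t : ℝ, θ (t + Real.pi / Real.sqrt a) = θ t + 2 * Real.pi := by
  set s := Real.sqrt a with hsdef
  have hs : 0 < s := Real.sqrt_pos.mpr ha
  have hs2 : s ^ 2 = a := Real.sq_sqrt ha.le
  -- the composite G ∘ θ has derivative 1
  have hcomp : ∀ t : ℝ, HasDerivAt (fun t => thetaG s (θ t) - t) 0 t := by
    intro t
    have hF := thetaF_pos hs (θ t)
    have h1 : HasDerivAt (fun t => thetaG s (θ t))
        (1 / ((1 + s ^ 2) - (1 - s ^ 2) * Real.cos (θ t))
          * (1 - Real.cos (θ t) + (1 + Real.cos (θ t)) * a)) t :=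
      (thetaG_hasDerivAt hs (θ t)).comp t (hθ t)
    have heq : 1 / ((1 + s ^ 2) - (1 - s ^ 2) * Real.cos (θ t))
        * (1 - Real.cos (θ t) + (1 + Real.cos (θ t)) * a) = 1 := by
      rw [hs2]
      have hne : (1 + a) - (1 - a) * Real.cos (θ t) ≠ 0 := by
        rw [← hs2]; exact (thetaF_pos hs _).ne'
      have hfe : (1:ℝ) - Real.cos (θ t) + (1 + Real.cos (θ t)) * a
          = (1 + a) - (1 - a) * Real.cos (θ t) := by ring
      rw [hfe, one_div_mul_cancel hne]
    rw [heq] at h1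
    have h2 := h1.sub (hasDerivAt_id t)
    simp at h2
    exact h2
  have hconst : ∀ t : ℝ, thetaG s (θ t) - t = thetaG s (θ 0) - 0 := by
    intro t
    have hdiff : Differentiable ℝ (fun t => thetaG s (θ t) - t) :=
      fun t => (hcomp t).differentiableAt
    exact is_const_of_deriv_eq_zero hdiff (fun t => (hcomp t).deriv) t 0
  intro t
  have key : thetaG s (θ (t + Real.pi / s)) = thetaG s (θ t + 2 * Real.pi) := by
    have h1 := hconst (t + Real.pi / s)
    have h2 := hconst t
    rw [thetaG_add_two_pi hs]
    have : thetaG s (θ (t + Real.pi / s)) - (t + Real.pi / s) = thetaG s (θ t) - t := by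
      rw [h1, h2]
    linarith
  exact (thetaG_strictMono hs).injective key
end

section
/- Let ε > 0, set r = √(2ε + ε²) − 1 − ε, and let m ≥ 1 be an integer. Then (1/2π)·∫₀^{2π} [sin θ/(1 + cos θ + ε)]·e^{−imθ} dθ = i·r^m. -/
lemma ptwise (ε r : ℝ) (hε : 0 < ε) (hr2 : r^2 + 2*(1+ε)*r + 1 = 0)
    (hrabs : |r| < 1) (θ : ℝ) :
    HasSum (fun k : ℕ => Complex.I * (r:ℂ)^(k+1) *
        (Complex.exp (Complex.I*(k+1)*θ) - Complex.exp (-Complex.I*(k+1)*θ)))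
      ((Real.sin θ / (1 + Real.cos θ + ε) : ℝ) : ℂ) := by
  set w : ℂ := (r:ℂ) * Complex.exp ((θ:ℂ) * Complex.I) with hw
  set w' : ℂ := (r:ℂ) * Complex.exp (-(θ:ℂ) * Complex.I) with hw'
  have hnw : ‖w‖ < 1 := by
    rw [hw]
    simp only [norm_mul, Complex.norm_exp_ofReal_mul_I]
    simpa [Complex.norm_real] using hrabs
  have hnw' : ‖w'‖ < 1 := by
    rw [hw']
    simp only [norm_mul]
    rw [show ‖(Complex.exp (-(θ:ℂ) * Complex.I))‖ = 1 by
      rw [show -(θ:ℂ) = ((-θ : ℝ) : ℂ) by push_cast; ring]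
      exact Complex.norm_exp_ofReal_mul_I (-θ)]
    simpa [Complex.norm_real] using hrabs
  have h1 : HasSum (fun k : ℕ => Complex.I * (w^(k+1) - w'^(k+1)))
      (Complex.I * (w * (1-w)⁻¹ - w' * (1-w')⁻¹)) :=
    (((hasSum_geometric_of_norm_lt_one hnw).mul_left w).sub
      ((hasSum_geometric_of_norm_lt_one hnw').mul_left w')).mul_left Complex.I |>.congr_fun
      (by intro k; simp [pow_succ'])
  -- rewrite the summand
  have hfun : ∀ k : ℕ, Complex.I * (w^(k+1) - w'^(k+1)) =
      Complex.I * (r:ℂ)^(k+1) *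
        (Complex.exp (Complex.I*(k+1)*θ) - Complex.exp (-Complex.I*(k+1)*θ)) := by
    intro k
    rw [hw, hw', mul_pow, mul_pow, ← Complex.exp_nat_mul, ← Complex.exp_nat_mul]
    push_cast
    ring_nf
  have h2 := h1.congr_fun (fun k => (hfun k).symm)
  have hA : (1:ℂ) - w ≠ 0 := by
    intro h; rw [sub_eq_zero] at h; rw [← h] at hnw; simp at hnw
  have hB : (1:ℂ) - w' ≠ 0 := by
    intro h; rw [sub_eq_zero] at h; rw [← h] at hnw'; simp at hnw'
  have he : Complex.exp ((θ:ℂ) * Complex.I) = (Real.cos θ : ℂ) + (Real.sin θ : ℂ) * Complex.I := by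
    rw [Complex.exp_mul_I, Complex.ofReal_cos, Complex.ofReal_sin]
  have he' : Complex.exp (-(θ:ℂ) * Complex.I) = (Real.cos θ : ℂ) - (Real.sin θ : ℂ) * Complex.I := by
    rw [Complex.exp_mul_I, Complex.cos_neg, Complex.sin_neg, Complex.ofReal_cos, Complex.ofReal_sin]
    ring
  have hden : ((1 + Real.cos θ + ε : ℝ) : ℂ) ≠ 0 := by
    have hp : (0:ℝ) < 1 + Real.cos θ + ε := by nlinarith [Real.neg_one_le_cos θ]
    exact_mod_cast hp.ne'
  have hsc : (Real.sin θ : ℂ)^2 + (Real.cos θ : ℂ)^2 = 1 := by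
    exact_mod_cast congrArg (Complex.ofReal) (Real.sin_sq_add_cos_sq θ)
  have hrC : (r:ℂ)^2 + 2*(1+(ε:ℂ))*(r:ℂ) + 1 = 0 := by exact_mod_cast congrArg (Complex.ofReal) hr2
  have hden2 : (1 + (Real.cos θ : ℂ) + (ε:ℂ)) ≠ 0 := by
    rw [show (1 + (Real.cos θ : ℂ) + (ε:ℂ)) = ((1 + Real.cos θ + ε : ℝ) : ℂ) by push_cast; ring]
    exact hden
  have hv : Complex.I * (w * (1-w)⁻¹ - w' * (1-w')⁻¹)
      = ((Real.sin θ / (1 + Real.cos θ + ε) : ℝ) : ℂ) := by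
    rw [hw, he] at hA ⊢
    rw [hw', he'] at hB ⊢
    rw [show ((Real.sin θ / (1 + Real.cos θ + ε) : ℝ) : ℂ)
      = (Real.sin θ : ℂ) / (1 + (Real.cos θ : ℂ) + (ε:ℂ)) by push_cast; ring]
    set c : ℂ := (Real.cos θ : ℂ)
    set s : ℂ := (Real.sin θ : ℂ)
    have hA' : 1 - (r:ℂ) * (c + Complex.I * s) ≠ 0 := by rwa [mul_comm Complex.I s]
    have hB' : 1 - (r:ℂ) * (c - Complex.I * s) ≠ 0 := by rwa [mul_comm Complex.I s]
    field_simp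
    ring_nf
    linear_combination (2*(r:ℂ)*c*s + 2*(r:ℂ)*s + 2*(r:ℂ)*s*(ε:ℂ) + (r:ℂ)^2*s^3) * Complex.I_sq
      + (-(r:ℂ)^2*s) * hsc + (-s) * hrC
  rw [hv] at h2
  exact h2

open intervalIntegral in
lemma ortho (n : ℤ) : (∫ θ in (0:ℝ)..(2 * Real.pi), Complex.exp (Complex.I * n * θ))
    = if n = 0 then (2 * Real.pi : ℂ) else 0 := by
  split_ifs with h
  · subst h; simp
  · have hc : (Complex.I * n : ℂ) ≠ 0 := by
      simp [Complex.I_ne_zero, h]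
    have key := integral_exp_mul_complex (a := (0:ℝ)) (b := 2 * Real.pi) hc
    simp only [mul_assoc] at key ⊢
    rw [key]
    rw [show (Complex.I * ((n : ℂ) * ((2 * Real.pi : ℝ) : ℂ))) = n * (2 * (Real.pi : ℂ) * Complex.I) by push_cast; ring]
    rw [Complex.exp_int_mul_two_pi_mul_I]
    simp

lemma term_int (r : ℝ) (m k : ℕ) (hm : 1 ≤ m) :
    (∫ θ in (0:ℝ)..(2*Real.pi), Complex.I * (r:ℂ)^(k+1) *
      (Complex.exp (Complex.I*(k+1)*θ) - Complex.exp (-Complex.I*(k+1)*θ)) *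
      Complex.exp (-Complex.I * m * θ))
    = if k + 1 = m then Complex.I * (r:ℂ)^m * (2*Real.pi) else 0 := by
  have hfun : ∀ θ : ℝ, Complex.I * (r:ℂ)^(k+1) *
      (Complex.exp (Complex.I*(k+1)*θ) - Complex.exp (-Complex.I*(k+1)*θ)) *
      Complex.exp (-Complex.I * m * θ)
      = Complex.I * (r:ℂ)^(k+1) *
        (Complex.exp (Complex.I * (((k:ℤ)+1-m : ℤ):ℂ) * θ)
          - Complex.exp (Complex.I * ((-((k:ℤ)+1)-m : ℤ):ℂ) * θ)) := by
    intro θ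
    have e1 : Complex.exp (Complex.I*((k:ℕ)+1:ℂ)*θ) * Complex.exp (-Complex.I*(m:ℂ)*θ)
        = Complex.exp (Complex.I * (((k:ℤ)+1-m : ℤ):ℂ) * θ) := by
      rw [← Complex.exp_add]; congr 1; push_cast; ring
    have e2 : Complex.exp (-Complex.I*((k:ℕ)+1:ℂ)*θ) * Complex.exp (-Complex.I*(m:ℂ)*θ)
        = Complex.exp (Complex.I * ((-((k:ℤ)+1)-m : ℤ):ℂ) * θ) := by
      rw [← Complex.exp_add]; congr 1; push_cast; ring
    rw [← e1, ← e2]; ring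
  rw [intervalIntegral.integral_congr (g := fun θ : ℝ => Complex.I * (r:ℂ)^(k+1) *
        (Complex.exp (Complex.I * (((k:ℤ)+1-m : ℤ):ℂ) * θ)
          - Complex.exp (Complex.I * ((-((k:ℤ)+1)-m : ℤ):ℂ) * θ)))
    (fun θ _ => hfun θ)]
  rw [intervalIntegral.integral_const_mul,
    intervalIntegral.integral_sub (by apply Continuous.intervalIntegrable; fun_prop)
      (by apply Continuous.intervalIntegrable; fun_prop),
    ortho, ortho]
  have h2 : ¬ ((-((k:ℤ)+1)-m : ℤ) = 0) := by omega
  by_cases h : k + 1 = m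
  · have h1 : ((k:ℤ)+1-m : ℤ) = 0 := by omega
    simp only [if_pos h1, if_neg h2, if_pos h]
    rw [show (r:ℂ)^(k+1) = (r:ℂ)^m by rw [h]]
    ring
  · have h1 : ¬ ((k:ℤ)+1-m : ℤ) = 0 := by omega
    simp only [if_neg h1, if_neg h2, if_neg h]
    ring


/-- The complex Fourier coefficients of the regularized coupling function
`q(θ) = sin θ/(1 + cos θ + ε)`:
`(1/2π)·∫₀^{2π} q(θ)·e^{-imθ} dθ = i·r^m` with `r = √(2ε+ε²) - 1 - ε`,
for every integer `m ≥ 1`. -/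
theorem regularized_coupling_fourier_coefficient (ε : ℝ) (hε : 0 < ε)
    (r : ℝ) (hr : r = Real.sqrt (2 * ε + ε ^ 2) - 1 - ε)
    (m : ℕ) (hm : 1 ≤ m) :
    (1 / (2 * (Real.pi : ℂ))) *
        ∫ θ in (0:ℝ)..(2 * Real.pi),
          ((Real.sin θ / (1 + Real.cos θ + ε) : ℝ) : ℂ) *
            Complex.exp (-Complex.I * (m : ℂ) * (θ : ℂ))
      = Complex.I * (r : ℂ) ^ m := by
  have hπ : (0:ℝ) ≤ 2 * Real.pi := by positivity
  have hsq : Real.sqrt (2*ε+ε^2) ^ 2 = 2*ε+ε^2 := Real.sq_sqrt (by positivity)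
  have hsn : 0 ≤ Real.sqrt (2*ε+ε^2) := Real.sqrt_nonneg _
  have hr2 : r^2 + 2*(1+ε)*r + 1 = 0 := by subst hr; nlinarith [hsq]
  have hrabs : |r| < 1 := by
    rw [abs_lt]; subst hr; constructor <;> nlinarith [hsq, hsn]
  set f : ℕ → ℝ → ℂ := fun k θ => Complex.I * (r:ℂ)^(k+1) *
      (Complex.exp (Complex.I*(k+1)*θ) - Complex.exp (-Complex.I*(k+1)*θ)) *
      Complex.exp (-Complex.I * (m:ℂ) * θ) with hf
  have hptsum : ∀ θ : ℝ, HasSum (fun k => f k θ)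
      (((Real.sin θ / (1 + Real.cos θ + ε) : ℝ) : ℂ) *
        Complex.exp (-Complex.I * (m:ℂ) * θ)) :=
    fun θ => (ptwise ε r hε hr2 hrabs θ).mul_right _
  -- measurability
  have hmeas : ∀ k : ℕ, MeasureTheory.AEStronglyMeasurable (f k)
      (MeasureTheory.volume.restrict (Set.Ioc (0:ℝ) (2*Real.pi))) := by
    intro k
    apply Continuous.aestronglyMeasurable
    rw [hf]; fun_prop
  -- uniform bound
  have hb : ∀ (k : ℕ) (θ : ℝ), ‖f k θ‖ ≤ 2 * |r|^(k+1) := by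
    intro k θ
    rw [hf]
    simp only [norm_mul, Complex.norm_I, norm_pow, Complex.norm_real, Real.norm_eq_abs]
    rw [show (-Complex.I * (m:ℂ) * (θ:ℂ)) = ((-(m*θ):ℝ):ℂ) * Complex.I by push_cast; ring,
      Complex.norm_exp_ofReal_mul_I]
    have hd : ‖(Complex.exp (Complex.I*((k:ℕ)+1:ℂ)*θ)
        - Complex.exp (-Complex.I*((k:ℕ)+1:ℂ)*θ))‖ ≤ 2 := by
      refine le_trans (norm_sub_le _ _) ?_
      rw [show (Complex.I*((k:ℕ)+1:ℂ)*(θ:ℂ)) = ((((k:ℕ)+1)*θ:ℝ):ℂ) * Complex.I by push_cast; ring,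
        show (-Complex.I*((k:ℕ)+1:ℂ)*(θ:ℂ)) = ((-(((k:ℕ)+1)*θ):ℝ):ℂ) * Complex.I by push_cast; ring,
        Complex.norm_exp_ofReal_mul_I, Complex.norm_exp_ofReal_mul_I]
      norm_num
    calc 1 * |r|^(k+1) * ‖_‖ * 1 ≤ 1 * |r|^(k+1) * 2 * 1 := by
          gcongr
      _ = 2 * |r|^(k+1) := by ring
  -- finiteness of the lintegral sum
  have hsum : (∑' k : ℕ, ∫⁻ θ in Set.Ioc (0:ℝ) (2*Real.pi), ‖f k θ‖₊) ≠ ⊤ := by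
    have hg : Summable (fun k : ℕ => 2 * |r| ^ (k + 1) * (2 * Real.pi)) := by
      refine ((summable_geometric_of_lt_one (abs_nonneg r) hrabs).mul_left
        (2 * |r| * (2 * Real.pi))).congr (fun k => ?_)
      rw [pow_succ]; ring
    have hle : (∑' k : ℕ, ∫⁻ θ in Set.Ioc (0:ℝ) (2*Real.pi), ‖f k θ‖₊)
        ≤ ∑' k : ℕ, ENNReal.ofReal (2 * |r| ^ (k + 1) * (2 * Real.pi)) := by
      refine ENNReal.tsum_le_tsum (fun k => ?_)
      have h1 : (∫⁻ θ in Set.Ioc (0:ℝ) (2*Real.pi), ‖f k θ‖₊)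
          ≤ ∫⁻ _ in Set.Ioc (0:ℝ) (2*Real.pi), ENNReal.ofReal (2 * |r| ^ (k + 1)) := by
        refine MeasureTheory.lintegral_mono (fun θ => ?_)
        rw [← enorm_eq_nnnorm, ← ofReal_norm]
        exact ENNReal.ofReal_le_ofReal (hb k θ)
      refine le_trans h1 ?_
      rw [MeasureTheory.lintegral_const, MeasureTheory.Measure.restrict_apply_univ,
        Real.volume_Ioc, sub_zero, ← ENNReal.ofReal_mul (by positivity)]
    refine ne_top_of_le_ne_top ?_ hle
    rw [← ENNReal.ofReal_tsum_of_nonneg (fun k => by positivity) hg]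
    exact ENNReal.ofReal_ne_top
  -- swap integral and sum
  have hint : (∫ θ in (0:ℝ)..(2*Real.pi),
      ((Real.sin θ / (1 + Real.cos θ + ε) : ℝ) : ℂ) *
        Complex.exp (-Complex.I * (m:ℂ) * θ))
      = ∑' k : ℕ, ∫ θ in (0:ℝ)..(2*Real.pi), f k θ := by
    have hrepr : (fun θ : ℝ => ((Real.sin θ / (1 + Real.cos θ + ε) : ℝ) : ℂ) *
        Complex.exp (-Complex.I * (m:ℂ) * θ)) = fun θ => ∑' k, f k θ :=
      funext fun θ => ((hptsum θ).tsum_eq).symm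
    rw [intervalIntegral.integral_of_le hπ, hrepr,
      MeasureTheory.integral_tsum hmeas hsum]
    exact tsum_congr fun k => (intervalIntegral.integral_of_le hπ).symm
  rw [hint]
  have hterm : ∀ k : ℕ, (∫ θ in (0:ℝ)..(2*Real.pi), f k θ)
      = if k + 1 = m then Complex.I * (r:ℂ)^m * (2*Real.pi) else 0 :=
    fun k => term_int r m k hm
  rw [tsum_congr hterm, tsum_eq_single (m-1) (by intro k hk; rw [if_neg (by omega)]),
    if_pos (by omega)]
  have : (Real.pi : ℂ) ≠ 0 := by exact_mod_cast Real.pi_ne_zero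
  field_simp
end

section
/- Let ε > 0 and set r = √(2ε + ε²) − 1 − ε (so that −1 < r < 0). Then for every θ ∈ ℝ the series Σ_{m=1}^∞ (i·r^m·e^{imθ} + conj(i·r^m·e^{imθ})) = −2·Σ_{m=1}^∞ r^m·sin(mθ) converges absolutely and its sum equals sin θ/(1 + cos θ + ε). -/
/-- With `r = √(2ε+ε²) - 1 - ε`, the Fourier series
`Σ_{m≥1} (i r^m e^{imθ} + c.c.) = -2 Σ_{m≥1} r^m sin(mθ)` converges absolutely
and sums to the regularized coupling function `sin θ/(1 + cos θ + ε)`. -/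
theorem regularized_coupling_fourier_series (ε : ℝ) (hε : 0 < ε)
    (r : ℝ) (hr : r = Real.sqrt (2 * ε + ε ^ 2) - 1 - ε) (θ : ℝ) :
    Summable (fun m : ℕ =>
      ‖Complex.I * (r : ℂ) ^ (m + 1) * Complex.exp (Complex.I * ((m : ℂ) + 1) * (θ : ℂ))
        + starRingEnd ℂ
            (Complex.I * (r : ℂ) ^ (m + 1) *
              Complex.exp (Complex.I * ((m : ℂ) + 1) * (θ : ℂ)))‖)
    ∧ ∑' m : ℕ,
        (Complex.I * (r : ℂ) ^ (m + 1) * Complex.exp (Complex.I * ((m : ℂ) + 1) * (θ : ℂ))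
          + starRingEnd ℂ
              (Complex.I * (r : ℂ) ^ (m + 1) *
                Complex.exp (Complex.I * ((m : ℂ) + 1) * (θ : ℂ))))
      = ((Real.sin θ / (1 + Real.cos θ + ε) : ℝ) : ℂ)
    ∧ (-2 : ℝ) * ∑' m : ℕ, r ^ (m + 1) * Real.sin ((m + 1) * θ)
      = Real.sin θ / (1 + Real.cos θ + ε) := by
  have hs0 : (0:ℝ) ≤ 2 * ε + ε ^ 2 := by nlinarith
  have hs2 : Real.sqrt (2 * ε + ε ^ 2) ^ 2 = 2 * ε + ε ^ 2 := Real.sq_sqrt hs0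
  have hsnn := Real.sqrt_nonneg (2 * ε + ε ^ 2)
  set s := Real.sqrt (2 * ε + ε ^ 2) with hsdef
  have hr0 : r < 0 := by nlinarith
  have hr1 : -1 < r := by nlinarith
  have habs : |r| < 1 := abs_lt.mpr ⟨hr1, by linarith⟩
  have hkey : 1 + r ^ 2 + 2 * r * (1 + ε) = 0 := by
    linear_combination (s + r + 1 + ε) * hr + hs2
  have hden : 0 < 1 + Real.cos θ + ε := by
    nlinarith [Real.neg_one_le_cos θ]
  -- geometric series
  set z : ℂ := (r : ℂ) * Complex.exp (Complex.I * (θ : ℂ)) with hzdef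
  have hznorm : ‖z‖ < 1 := by
    rw [hzdef, norm_mul]
    simp [Complex.norm_exp, Complex.norm_real]
    exact habs
  have hgs : HasSum (fun n : ℕ => z * z ^ n) (z * (1 - z)⁻¹) :=
    (hasSum_geometric_of_norm_lt_one hznorm).mul_left z
  have hzpow : ∀ m : ℕ, z * z ^ m
      = ((r ^ (m + 1) : ℝ) : ℂ) * Complex.exp (Complex.I * ((m : ℂ) + 1) * (θ : ℂ)) := by
    intro m
    have h1 : Complex.exp (Complex.I * ((m : ℂ) + 1) * (θ : ℂ))
        = Complex.exp (((m : ℕ) + 1 : ℕ) * (Complex.I * (θ : ℂ))) := by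
      congr 1; push_cast; ring
    rw [h1, Complex.exp_nat_mul]
    push_cast
    ring
  -- re/im of the terms
  have hre : ∀ m : ℕ,
      (Complex.I * (r : ℂ) ^ (m + 1) * Complex.exp (Complex.I * ((m : ℂ) + 1) * (θ : ℂ))).re
        = -(r ^ (m + 1) * Real.sin ((m + 1) * θ)) := by
    intro m
    have h1 : Complex.I * ((m : ℂ) + 1) * (θ : ℂ) = Complex.I * ((((m : ℝ) + 1) * θ : ℝ) : ℂ) := by
      push_cast; ring
    rw [h1]
    simp [← Complex.ofReal_pow, Complex.exp_re, Complex.exp_im, Complex.mul_re, Complex.mul_im]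
  have him : ∀ m : ℕ, (z * z ^ m).im = r ^ (m + 1) * Real.sin (((m : ℝ) + 1) * θ) := by
    intro m
    rw [hzpow m]
    have h1 : Complex.I * ((m : ℂ) + 1) * (θ : ℂ) = Complex.I * ((((m : ℝ) + 1) * θ : ℝ) : ℂ) := by
      push_cast; ring
    rw [h1]
    simp [← Complex.ofReal_pow, Complex.exp_re, Complex.exp_im, Complex.mul_im]
  -- the real series sums to S
  have hSsum : HasSum (fun m : ℕ => r ^ (m + 1) * Real.sin (((m : ℝ) + 1) * θ))
      ((z * (1 - z)⁻¹).im) := by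
    have := ((Complex.hasSum_iff _ _).mp hgs).2
    exact this.congr_fun fun m => (him m).symm ▸ rfl
  -- value of the geometric sum's imaginary part
  have hzre : z.re = r * Real.cos θ := by
    rw [hzdef]; simp [Complex.exp_re, Complex.exp_im, Complex.mul_re]
  have hzim : z.im = r * Real.sin θ := by
    rw [hzdef]; simp [Complex.exp_re, Complex.exp_im, Complex.mul_im]
  have hN : Complex.normSq (1 - z) = 1 - 2 * r * Real.cos θ + r ^ 2 := by
    rw [Complex.normSq_apply]
    simp only [Complex.sub_re, Complex.sub_im, Complex.one_re, Complex.one_im, hzre, hzim]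
    linear_combination r ^ 2 * Real.sin_sq_add_cos_sq θ
  have hNpos : 0 < 1 - 2 * r * Real.cos θ + r ^ 2 := by
    nlinarith [Real.neg_one_le_cos θ, sq_nonneg (1 + r)]
  have hval : (z * (1 - z)⁻¹).im = -(Real.sin θ) / (2 * (1 + Real.cos θ + ε)) := by
    have hd : z * (1 - z)⁻¹ = z / (1 - z) := (div_eq_mul_inv z (1 - z)).symm
    rw [hd, Complex.div_im, hN]
    simp only [Complex.sub_re, Complex.sub_im, Complex.one_re, Complex.one_im, hzre, hzim]
    rw [div_sub_div_same, div_eq_div_iff (ne_of_gt hNpos) (by positivity)]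
    linear_combination Real.sin θ * hkey
  rw [hval] at hSsum
  -- term identity with the complex series
  have hterm : ∀ m : ℕ,
      Complex.I * (r : ℂ) ^ (m + 1) * Complex.exp (Complex.I * ((m : ℂ) + 1) * (θ : ℂ))
        + starRingEnd ℂ (Complex.I * (r : ℂ) ^ (m + 1) *
            Complex.exp (Complex.I * ((m : ℂ) + 1) * (θ : ℂ)))
      = (((-2 : ℝ) * (r ^ (m + 1) * Real.sin (((m : ℝ) + 1) * θ)) : ℝ) : ℂ) := by
    intro m
    rw [Complex.add_conj, hre m]
    push_cast
    ring
  have hgeo : Summable (fun m : ℕ => 2 * |r| ^ (m + 1)) := by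
    have h := (summable_geometric_of_lt_one (abs_nonneg r) habs).mul_left (2 * |r|)
    refine h.congr fun m => ?_
    rw [pow_succ]; ring
  refine ⟨?_, ?_, ?_⟩
  · refine Summable.of_nonneg_of_le (fun m => norm_nonneg _) (fun m => ?_) hgeo
    rw [hterm m, Complex.norm_real, Real.norm_eq_abs]
    have h1 : |Real.sin (((m : ℝ) + 1) * θ)| ≤ 1 := Real.abs_sin_le_one _
    have h2 : (0:ℝ) ≤ |r| ^ (m + 1) := pow_nonneg (abs_nonneg r) _
    calc |(-2 : ℝ) * (r ^ (m + 1) * Real.sin (((m : ℝ) + 1) * θ))|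
        = 2 * (|r| ^ (m + 1) * |Real.sin (((m : ℝ) + 1) * θ)|) := by
          rw [abs_mul, abs_mul, abs_pow]; norm_num
      _ ≤ 2 * |r| ^ (m + 1) := by nlinarith
  · have h2 : HasSum (fun m : ℕ => (-2 : ℝ) * (r ^ (m + 1) * Real.sin (((m : ℝ) + 1) * θ)))
        ((-2 : ℝ) * (-(Real.sin θ) / (2 * (1 + Real.cos θ + ε)))) := hSsum.mul_left _
    calc ∑' m : ℕ,
        (Complex.I * (r : ℂ) ^ (m + 1) * Complex.exp (Complex.I * ((m : ℂ) + 1) * (θ : ℂ))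
          + starRingEnd ℂ (Complex.I * (r : ℂ) ^ (m + 1) *
              Complex.exp (Complex.I * ((m : ℂ) + 1) * (θ : ℂ))))
        = ∑' m : ℕ, (((-2 : ℝ) * (r ^ (m + 1) * Real.sin (((m : ℝ) + 1) * θ)) : ℝ) : ℂ) :=
          tsum_congr hterm
      _ = (((-2 : ℝ) * (-(Real.sin θ) / (2 * (1 + Real.cos θ + ε))) : ℝ) : ℂ) := by
          rw [← Complex.ofReal_tsum, h2.tsum_eq]
      _ = ((Real.sin θ / (1 + Real.cos θ + ε) : ℝ) : ℂ) := by
          norm_cast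
          field_simp
          simp only [Int.cast_negSucc]
          push_cast
          ring
  · rw [hSsum.tsum_eq]
    field_simp
end

section
/- Let η₀, Δ, g ∈ ℝ, let T : I → ℝ be a real-valued function on an interval I, and let b : I → ℂ be differentiable with 1 + b(t) ≠ 0 for all t, satisfying ∂b/∂t = [(iη₀ − Δ)(1+b)² − i(1−b)²]/2 + [i·(1+b)²·g·T + g·(1−b²)]/2. Then w(t) := (1 − conj(b(t)))/(1 + conj(b(t))) is differentiable and satisfies ∂w/∂t = iη₀ + Δ − i·w² + i·g·T − g·w. -/
/-- If the Ott/Antonsen order parameter `b` of a gap-junction coupled network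
satisfies `∂b/∂t = [(iη₀ - Δ)(1+b)² - i(1-b)²]/2 + [i(1+b)²gT + g(1-b²)]/2`, then
`w = (1 - conj b)/(1 + conj b)` satisfies `∂w/∂t = iη₀ + Δ - iw² + igT - gw`. -/
theorem w_equation_from_b_equation (η₀ Δ g : ℝ) (s : Set ℝ)
    (T : ℝ → ℝ) (b : ℝ → ℂ)
    (hb1 : ∀ t ∈ s, 1 + b t ≠ 0)
    (hb : ∀ t ∈ s,
      HasDerivAt b
        (((Complex.I * (η₀ : ℂ) - (Δ : ℂ)) * (1 + b t) ^ 2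
            - Complex.I * (1 - b t) ^ 2) / 2
          + (Complex.I * (1 + b t) ^ 2 * (g : ℂ) * (T t : ℂ)
              + (g : ℂ) * (1 - (b t) ^ 2)) / 2) t) :
    ∀ t ∈ s,
      HasDerivAt
        (fun τ => (1 - starRingEnd ℂ (b τ)) / (1 + starRingEnd ℂ (b τ)))
        (Complex.I * (η₀ : ℂ) + (Δ : ℂ)
          - Complex.I *
              ((1 - starRingEnd ℂ (b t)) / (1 + starRingEnd ℂ (b t))) ^ 2
          + Complex.I * (g : ℂ) * (T t : ℂ)
          - (g : ℂ) * ((1 - starRingEnd ℂ (b t)) / (1 + starRingEnd ℂ (b t)))) t := by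
  intro t ht
  have hc : (1 : ℂ) + starRingEnd ℂ (b t) ≠ 0 := by
    intro h
    apply hb1 t ht
    have := congrArg (starRingEnd ℂ) h
    simpa using this
  have hd : HasDerivAt (fun τ => starRingEnd ℂ (b τ))
      (starRingEnd ℂ
        (((Complex.I * (η₀ : ℂ) - (Δ : ℂ)) * (1 + b t) ^ 2
            - Complex.I * (1 - b t) ^ 2) / 2
          + (Complex.I * (1 + b t) ^ 2 * (g : ℂ) * (T t : ℂ)
              + (g : ℂ) * (1 - (b t) ^ 2)) / 2)) t := (hb t ht).star
  have hnum := (hasDerivAt_const t (1 : ℂ)).sub hd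
  have hden := (hasDerivAt_const t (1 : ℂ)).add hd
  have hdiv := hnum.div hden hc
  convert hdiv using 1
  case e'_4 => rfl
  case e'_8 => rfl
  simp only [Pi.add_apply, Pi.sub_apply]
  set c := starRingEnd ℂ (b t) with hcdef
  have hbc : b t = starRingEnd ℂ c := by simp [hcdef]
  rw [hbc]
  simp only [map_add, map_sub, map_mul, map_div₀, map_one, map_pow, map_ofNat,
    Complex.conj_I, Complex.conj_ofReal, Complex.conj_conj]
  field_simp
  ring
end

section
/- Let Δ > 0 and η₀ ∈ ℝ, and let F : {z ∈ ℂ : Im z ≥ 0} → ℂ be continuous, bounded, and holomorphic on the open upper half-plane {Im z > 0}. Then ∫_{−∞}^{∞} [ (Δ/π) / ((η − η₀)² + Δ²) ]·F(η) dη = F(η₀ + iΔ). (Integration of a boundary-regular bounded holomorphic function against the Lorentzian density g(η) = (Δ/π)/((η−η₀)² + Δ²) evaluates it at the pole η₀ + iΔ in the upper half-plane.) -/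
open MeasureTheory Complex Set Filter Topology intervalIntegral


namespace LorentzHelper

noncomputable def g (Δ η₀ : ℝ) (x : ℝ) : ℝ := (Δ / Real.pi) / ((x - η₀) ^ 2 + Δ ^ 2)

lemma g_nonneg {Δ : ℝ} (hΔ : 0 < Δ) (η₀ x : ℝ) : 0 ≤ g Δ η₀ x := by
  unfold g; positivity

lemma g_eq {Δ : ℝ} (hΔ : 0 < Δ) (η₀ x : ℝ) :
    g Δ η₀ x = (Real.pi * Δ)⁻¹ * (1 + ((x - η₀) / Δ) ^ 2)⁻¹ := by
  unfold g
  have h : (0:ℝ) < (x - η₀) ^ 2 + Δ ^ 2 := by positivity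
  have hπ : Real.pi ≠ 0 := Real.pi_ne_zero
  field_simp
  ring

lemma g_integrable {Δ : ℝ} (hΔ : 0 < Δ) (η₀ : ℝ) : Integrable (g Δ η₀) := by
  have h1 : Integrable fun x : ℝ => (1 + (x / Δ) ^ 2)⁻¹ :=
    integrable_inv_one_add_sq.comp_div hΔ.ne'
  have h2 : Integrable fun x : ℝ => (1 + ((x - η₀) / Δ) ^ 2)⁻¹ := h1.comp_sub_right η₀
  have := h2.const_mul (Real.pi * Δ)⁻¹
  refine this.congr (by filter_upwards with x using (g_eq hΔ η₀ x).symm)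

lemma g_integral {Δ : ℝ} (hΔ : 0 < Δ) (η₀ : ℝ) : ∫ x : ℝ, g Δ η₀ x = 1 := by
  have h0 : ∫ x : ℝ, (1 + ((x - η₀) / Δ) ^ 2)⁻¹
      = ∫ x : ℝ, (1 + (x / Δ) ^ 2)⁻¹ :=
    integral_sub_right_eq_self (fun x => (1 + (x / Δ) ^ 2)⁻¹) η₀
  have h1 : ∫ x : ℝ, (1 + (x / Δ) ^ 2)⁻¹ = |Δ| • ∫ x : ℝ, (1 + x ^ 2)⁻¹ :=
    Measure.integral_comp_div (fun x => (1 + x ^ 2)⁻¹) Δ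
  calc ∫ x : ℝ, g Δ η₀ x = ∫ x : ℝ, (Real.pi * Δ)⁻¹ * (1 + ((x - η₀) / Δ) ^ 2)⁻¹ := by
        simp_rw [g_eq hΔ η₀]
    _ = (Real.pi * Δ)⁻¹ * ∫ x : ℝ, (1 + ((x - η₀) / Δ) ^ 2)⁻¹ := integral_const_mul _ _
    _ = 1 := by
        rw [h0, h1, integral_univ_inv_one_add_sq, abs_of_pos hΔ]
        field_simp
        ring

lemma core {Δ η₀ δ : ℝ} (hΔ : 0 < Δ) (hδ : 0 < δ) (hδΔ : δ ≤ Δ)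
    {F : ℂ → ℂ} {C : ℝ}
    (hC : ∀ z : ℂ, 0 ≤ z.im → ‖F z‖ ≤ C)
    (hF : DifferentiableOn ℂ F {z : ℂ | -δ < z.im}) :
    ∫ η : ℝ, g Δ η₀ η • F (η : ℂ) = F ((η₀ : ℂ) + (Δ : ℂ) * I) := by
  set U : Set ℂ := {z : ℂ | -δ < z.im} with hUdef
  have hUopen : IsOpen U := isOpen_lt continuous_const Complex.continuous_im
  set w : ℂ := (η₀ : ℂ) + (Δ : ℂ) * I with hw
  set w' : ℂ := (η₀ : ℂ) - (Δ : ℂ) * I with hw'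
  have hwim : w.im = Δ := by simp [hw]
  have hw'im : w'.im = -Δ := by simp [hw']
  have hwU : w ∈ U := by simp only [hUdef, mem_setOf_eq, hwim]; linarith
  have hsub : {z : ℂ | 0 ≤ z.im} ⊆ U := fun z hz => by
    simp only [hUdef, mem_setOf_eq] at hz ⊢; linarith [hz]
  have hUw' : ∀ z ∈ U, z - w' ≠ 0 := by
    intro z hz h
    rw [sub_eq_zero] at h
    rw [h] at hz
    simp only [hUdef, mem_setOf_eq, hw'im] at hz
    linarith
  set H : ℂ → ℂ := fun z => ((Δ / Real.pi : ℝ) : ℂ) * (z - w')⁻¹ * dslope F w z with hH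
  have hHdiff : DifferentiableOn ℂ H U := by
    apply DifferentiableOn.mul
    · exact (differentiableOn_const _).mul
        (((differentiableOn_id.sub_const w')).inv (hUw'))
    · exact (Complex.differentiableOn_dslope (hUopen.mem_nhds hwU)).mpr hF
  have hHcont : ContinuousOn H U := hHdiff.continuousOn
  -- value of H on the real line
  have hC0 : 0 ≤ C := le_trans (norm_nonneg _) (hC w (by rw [hwim]; exact hΔ.le))
  have hne : ∀ x : ℝ, (x : ℂ) ≠ w := by
    intro x h
    have := congrArg Complex.im h
    simp [hwim] at this
    exact absurd this.symm (ne_of_gt hΔ)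
  have keyR : ∀ x : ℝ, H x = g Δ η₀ x • (F x - F w) := by
    intro x
    have pos : (0:ℝ) < (x - η₀) ^ 2 + Δ ^ 2 := by positivity
    have prod : ((x : ℂ) - w') * ((x : ℂ) - w) = (((x - η₀) ^ 2 + Δ ^ 2 : ℝ) : ℂ) := by
      rw [hw, hw']
      push_cast
      ring_nf
      rw [Complex.I_sq]
      ring
    have hxw := hne x
    have hxw' : (x : ℂ) - w' ≠ 0 := hUw' _ (hsub (by simp))
    rw [hH]
    simp only
    rw [dslope_of_ne F hxw, slope_def_field]
    rw [Complex.real_smul]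
    unfold g
    have h2 : (((x - η₀) ^ 2 + Δ ^ 2 : ℝ) : ℂ) ≠ 0 := by
      exact_mod_cast ne_of_gt pos
    field_simp
    have e : ((x - η₀) ^ 2 + Δ ^ 2) * (Δ / (Real.pi * ((x - η₀) ^ 2 + Δ ^ 2))) = Δ / Real.pi := by
      rw [← mul_div_assoc, mul_comm Real.pi, ← div_div, mul_div_cancel_left₀ _ pos.ne']
    have e' : (((x - η₀) ^ 2 + Δ ^ 2 : ℝ) : ℂ) * ((Δ / (Real.pi * ((x - η₀) ^ 2 + Δ ^ 2)) : ℝ) : ℂ)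
        = ((Δ / Real.pi : ℝ) : ℂ) := by exact_mod_cast e
    linear_combination (-(F ↑x - F w) * ((Δ / (Real.pi * ((x - η₀) ^ 2 + Δ ^ 2)) : ℝ) : ℂ)) * prod
      - (F ↑x - F w) * e'
  -- continuity and integrability of H on ℝ
  have hHcR : Continuous fun x : ℝ => H (x : ℂ) :=
    hHcont.comp_continuous Complex.continuous_ofReal fun x => hsub (by simp)
  have hgnn : ∀ x : ℝ, 0 ≤ g Δ η₀ x := fun x => by unfold g; positivity
  have hHint : Integrable fun x : ℝ => H (x : ℂ) := by
    have hgi : Integrable (g Δ η₀) := g_integrable hΔ η₀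
    refine Integrable.mono' (hgi.mul_const (2 * C)) hHcR.aestronglyMeasurable ?_
    filter_upwards with x
    rw [keyR x, norm_smul, Real.norm_eq_abs, _root_.abs_of_nonneg (hgnn x)]
    have : ‖F (x : ℂ) - F w‖ ≤ 2 * C := by
      calc ‖F (x : ℂ) - F w‖ ≤ ‖F (x : ℂ)‖ + ‖F w‖ := norm_sub_le _ _
        _ ≤ C + C := add_le_add (hC _ (by simp)) (hC _ (by rw [hwim]; exact hΔ.le))
        _ = 2 * C := by ring
    exact mul_le_mul_of_nonneg_left this (hgnn x)
  -- uniform bound on H away from the poles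
  have hHbound : ∀ r : ℝ, 0 < r → ∀ z : ℂ, r ≤ ‖z - w‖ → r ≤ ‖z - w'‖ →
      ‖F z‖ ≤ C → ‖H z‖ ≤ Δ / Real.pi * (2 * C) / r ^ 2 := by
    intro r hr z h1 h2 hFz
    have hzw : z ≠ w := by
      intro h; rw [h, sub_self, norm_zero] at h1; linarith
    have hFw : ‖F w‖ ≤ C := hC _ (by rw [hwim]; exact hΔ.le)
    rw [hH]
    simp only
    rw [dslope_of_ne F hzw, slope_def_field]
    rw [norm_mul, norm_mul, Complex.norm_real, Real.norm_eq_abs,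
      _root_.abs_of_nonneg (by positivity : (0:ℝ) ≤ Δ / Real.pi), norm_inv, norm_div]
    have hzw0 : (0:ℝ) < ‖z - w‖ := lt_of_lt_of_le hr h1
    have hzw'0 : (0:ℝ) < ‖z - w'‖ := lt_of_lt_of_le hr h2
    have e1 : ‖z - w'‖⁻¹ ≤ r⁻¹ := inv_anti₀ hr h2
    have e2 : ‖F z - F w‖ / ‖z - w‖ ≤ 2 * C / r := by
      apply div_le_div₀ (by positivity) _ hr h1
      calc ‖F z - F w‖ ≤ ‖F z‖ + ‖F w‖ := norm_sub_le _ _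
        _ ≤ C + C := add_le_add hFz hFw
        _ = 2 * C := by ring
    calc Δ / Real.pi * ‖z - w'‖⁻¹ * (‖F z - F w‖ / ‖z - w‖)
        ≤ Δ / Real.pi * r⁻¹ * (2 * C / r) := by
          apply mul_le_mul _ e2 (by positivity) (by positivity)
          exact mul_le_mul_of_nonneg_left e1 (by positivity)
      _ = Δ / Real.pi * (2 * C) / r ^ 2 := by
          rw [pow_two]
          ring
  -- rectangle contour identity
  have rect : ∀ R : ℝ, 0 ≤ R →
      (∫ x in (-R)..R, H (x : ℂ)) =
        (∫ x in (-R)..R, H ((x : ℂ) + (R : ℂ) * I))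
          - I • (∫ y in (0:ℝ)..R, H ((R : ℂ) + (y : ℂ) * I))
          + I • (∫ y in (0:ℝ)..R, H (-(R : ℂ) + (y : ℂ) * I)) := by
    intro R hR
    have hrect := Complex.integral_boundary_rect_eq_zero_of_differentiableOn H
      ((-R : ℝ) : ℂ) ((R : ℂ) + (R : ℂ) * I) ?_
    · simp only [Complex.ofReal_neg, Complex.neg_re, Complex.neg_im, Complex.ofReal_re,
        Complex.ofReal_im, Complex.add_re, Complex.add_im, Complex.mul_re, Complex.mul_im,
        Complex.I_re, Complex.I_im, mul_zero, mul_one, zero_mul, sub_zero, add_zero, zero_add,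
        neg_zero, Complex.ofReal_zero] at hrect
      linear_combination hrect
    · apply hHdiff.mono
      intro ζ hζ
      rw [Complex.mem_reProdIm] at hζ
      have h2 := hζ.2
      simp only [Complex.ofReal_neg, Complex.neg_im, Complex.ofReal_im, Complex.add_im,
        Complex.mul_im, Complex.I_im, Complex.I_re, Complex.ofReal_re, mul_one, mul_zero,
        zero_mul, add_zero, zero_add, neg_zero] at h2
      rw [Set.uIcc_of_le hR] at h2
      exact hsub (by simpa using h2.1)
  -- the integral of H over ℝ vanishes
  have hIzero : (∫ x : ℝ, H (x : ℂ)) = 0 := by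
    set R₀ : ℝ := 2 * (|η₀| + Δ) + 1 with hR₀
    have hwabs : ‖w‖ ≤ |η₀| + Δ := by
      rw [hw]
      refine (norm_add_le _ _).trans ?_
      simp [abs_of_pos hΔ]
    have hw'abs : ‖w'‖ ≤ |η₀| + Δ := by
      rw [hw']
      refine (norm_sub_le _ _).trans ?_
      simp [abs_of_pos hΔ]
    have hbig : ∀ R : ℝ, R₀ ≤ R → ∀ z : ℂ, 0 ≤ z.im → R ≤ ‖z‖ →
        ‖H z‖ ≤ Δ / Real.pi * (2 * C) / (R / 2) ^ 2 := by
      intro R hRR z hzim hzabs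
      have hRpos : (0:ℝ) < R := lt_of_lt_of_le (by positivity) hRR
      have hhalf : |η₀| + Δ ≤ R / 2 := by
        rw [hR₀] at hRR; linarith
      have e1 : R / 2 ≤ ‖z - w‖ := by
        have h := norm_sub_norm_le z w
        have : ‖w‖ ≤ R / 2 := hwabs.trans hhalf
        linarith
      have e2 : R / 2 ≤ ‖z - w'‖ := by
        have h := norm_sub_norm_le z w'
        have : ‖w'‖ ≤ R / 2 := hw'abs.trans hhalf
        linarith
      exact hHbound (R / 2) (by positivity) z e1 e2 (hC z hzim)
    have hRpos' : (0:ℝ) < R₀ := by rw [hR₀]; positivity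
    -- limits of the three boundary pieces
    have htop : Tendsto (fun R : ℝ => ∫ x in (-R)..R, H ((x : ℂ) + (R : ℂ) * I))
        atTop (𝓝 0) := by
      apply squeeze_zero_norm' (a := fun R => Δ / Real.pi * (2 * C) * 8 / R)
      · filter_upwards [eventually_ge_atTop R₀] with R hRR
        have hRpos : (0:ℝ) < R := lt_of_lt_of_le hRpos' hRR
        have hb : ∀ x ∈ Set.uIoc (-R) R, ‖H ((x : ℂ) + (R : ℂ) * I)‖ ≤
            Δ / Real.pi * (2 * C) / (R / 2) ^ 2 := by
          intro x _
          refine hbig R hRR _ (by simp [hRpos.le]) ?_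
          calc R = |((x : ℂ) + (R : ℂ) * I).im| := by simp [abs_of_pos hRpos]
            _ ≤ ‖(x : ℂ) + (R : ℂ) * I‖ := Complex.abs_im_le_norm _
        refine (intervalIntegral.norm_integral_le_of_norm_le_const hb).trans ?_
        have hRne : R ≠ 0 := hRpos.ne'
        refine le_of_eq ?_
        rw [abs_of_pos (by linarith : (0:ℝ) < R - -R)]
        field_simp
        ring
      · exact tendsto_const_nhds.div_atTop tendsto_id
    have hright : Tendsto (fun R : ℝ => I • (∫ y in (0:ℝ)..R, H ((R : ℂ) + (y : ℂ) * I)))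
        atTop (𝓝 0) := by
      apply squeeze_zero_norm' (a := fun R => Δ / Real.pi * (2 * C) * 4 / R)
      · filter_upwards [eventually_ge_atTop R₀] with R hRR
        have hRpos : (0:ℝ) < R := lt_of_lt_of_le hRpos' hRR
        have hb : ∀ y ∈ Set.uIoc (0:ℝ) R, ‖H ((R : ℂ) + (y : ℂ) * I)‖ ≤
            Δ / Real.pi * (2 * C) / (R / 2) ^ 2 := by
          intro y hy
          rw [Set.uIoc_of_le hRpos.le] at hy
          refine hbig R hRR _ (by simp [hy.1.le]) ?_
          calc R = |((R : ℂ) + (y : ℂ) * I).re| := by simp [abs_of_pos hRpos]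
            _ ≤ ‖(R : ℂ) + (y : ℂ) * I‖ := Complex.abs_re_le_norm _
        rw [norm_smul, Complex.norm_I, one_mul]
        refine (intervalIntegral.norm_integral_le_of_norm_le_const hb).trans ?_
        have hRne : R ≠ 0 := hRpos.ne'
        refine le_of_eq ?_
        rw [abs_of_pos (by linarith : (0:ℝ) < R - 0)]
        field_simp
        ring
      · exact tendsto_const_nhds.div_atTop tendsto_id
    have hleft : Tendsto (fun R : ℝ => I • (∫ y in (0:ℝ)..R, H (-(R : ℂ) + (y : ℂ) * I)))
        atTop (𝓝 0) := by
      apply squeeze_zero_norm' (a := fun R => Δ / Real.pi * (2 * C) * 4 / R)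
      · filter_upwards [eventually_ge_atTop R₀] with R hRR
        have hRpos : (0:ℝ) < R := lt_of_lt_of_le hRpos' hRR
        have hb : ∀ y ∈ Set.uIoc (0:ℝ) R, ‖H (-(R : ℂ) + (y : ℂ) * I)‖ ≤
            Δ / Real.pi * (2 * C) / (R / 2) ^ 2 := by
          intro y hy
          rw [Set.uIoc_of_le hRpos.le] at hy
          refine hbig R hRR _ (by simp [hy.1.le]) ?_
          calc R = |(-(R : ℂ) + (y : ℂ) * I).re| := by simp [abs_of_pos hRpos]
            _ ≤ ‖-(R : ℂ) + (y : ℂ) * I‖ := Complex.abs_re_le_norm _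
        rw [norm_smul, Complex.norm_I, one_mul]
        refine (intervalIntegral.norm_integral_le_of_norm_le_const hb).trans ?_
        have hRne : R ≠ 0 := hRpos.ne'
        refine le_of_eq ?_
        rw [abs_of_pos (by linarith : (0:ℝ) < R - 0)]
        field_simp
        ring
      · exact tendsto_const_nhds.div_atTop tendsto_id
    have hcomb : Tendsto (fun R : ℝ => (∫ x in (-R)..R, H ((x : ℂ) + (R : ℂ) * I))
        - I • (∫ y in (0:ℝ)..R, H ((R : ℂ) + (y : ℂ) * I))
        + I • (∫ y in (0:ℝ)..R, H (-(R : ℂ) + (y : ℂ) * I))) atTop (𝓝 0) := by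
      have h := (htop.sub hright).add hleft
      simpa using h
    have hbtend : Tendsto (fun R : ℝ => ∫ x in (-R)..R, H (x : ℂ)) atTop
        (𝓝 (∫ x : ℝ, H (x : ℂ))) :=
      intervalIntegral_tendsto_integral hHint tendsto_neg_atTop_atBot tendsto_id
    have hz : Tendsto (fun R : ℝ => ∫ x in (-R)..R, H (x : ℂ)) atTop (𝓝 0) := by
      refine hcomb.congr' ?_
      filter_upwards [eventually_ge_atTop 0] with R hR using (rect R hR).symm
    exact tendsto_nhds_unique hbtend hz
  -- assemble
  have hsplit : ∀ x : ℝ, g Δ η₀ x • F (x : ℂ) = H (x : ℂ) + g Δ η₀ x • F w := by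
    intro x
    rw [keyR x, smul_sub]
    abel
  calc ∫ η : ℝ, g Δ η₀ η • F (η : ℂ)
      = ∫ η : ℝ, (H (η : ℂ) + g Δ η₀ η • F w) := by simp_rw [hsplit]
    _ = (∫ η : ℝ, H (η : ℂ)) + ∫ _η : ℝ, g Δ η₀ _η • F w :=
        integral_add hHint ((g_integrable hΔ η₀).smul_const (F w))
    _ = F w := by
        rw [hIzero, zero_add, _root_.integral_smul_const, g_integral hΔ η₀, one_smul]

lemma g_continuous {Δ : ℝ} (hΔ : 0 < Δ) (η₀ : ℝ) : Continuous (g Δ η₀) := by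
  apply Continuous.div continuous_const (by fun_prop)
  intro x
  positivity

end LorentzHelper



open MeasureTheory in
/-- Integrating a bounded function, continuous on the closed upper half-plane and
holomorphic on the open upper half-plane, against the Lorentzian density
`g(η) = (Δ/π)/((η-η₀)² + Δ²)` evaluates it at the pole `η₀ + iΔ`. -/
theorem lorentzian_average_evaluates_at_pole (Δ η₀ : ℝ) (hΔ : 0 < Δ)
    (F : ℂ → ℂ)
    (hFcont : ContinuousOn F {z : ℂ | 0 ≤ z.im})
    (hFbdd : ∃ C : ℝ, ∀ z : ℂ, 0 ≤ z.im → ‖F z‖ ≤ C)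
    (hFhol : DifferentiableOn ℂ F {z : ℂ | 0 < z.im}) :
    ∫ η : ℝ, ((Δ / Real.pi) / ((η - η₀) ^ 2 + Δ ^ 2)) • F (η : ℂ)
      = F ((η₀ : ℂ) + (Δ : ℂ) * Complex.I) := by
  obtain ⟨C, hC⟩ := hFbdd
  have key : ∀ ε : ℝ, 0 < ε →
      (∫ η : ℝ, LorentzHelper.g Δ η₀ η • F ((η : ℂ) + (ε : ℂ) * Complex.I))
        = F ((η₀ : ℂ) + ((Δ + ε : ℝ) : ℂ) * Complex.I) := by
    intro ε hε
    have hδ : 0 < min ε Δ := lt_min hε hΔ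
    have hdiff : DifferentiableOn ℂ (fun z => F (z + (ε : ℂ) * Complex.I))
        {z : ℂ | -(min ε Δ) < z.im} := by
      apply DifferentiableOn.comp hFhol
        ((differentiable_id.add_const _).differentiableOn)
      intro z hz
      simp only [Set.mem_setOf_eq] at hz ⊢
      simp only [id_eq]
      rw [Complex.add_im]
      have h1 : min ε Δ ≤ ε := min_le_left ε Δ
      have h2 : (((ε : ℂ)) * Complex.I).im = ε := by simp
      rw [h2]
      linarith
    have hCb : ∀ z : ℂ, 0 ≤ z.im → ‖F (z + (ε : ℂ) * Complex.I)‖ ≤ C := by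
      intro z hz
      apply hC
      rw [Complex.add_im]
      have h2 : (((ε : ℂ)) * Complex.I).im = ε := by simp
      rw [h2]
      linarith
    have h := LorentzHelper.core (η₀ := η₀) hΔ hδ (min_le_right ε Δ) hCb hdiff
    rw [h]
    congr 1
    push_cast
    ring
  have hCnn : 0 ≤ C :=
    le_trans (norm_nonneg _) (hC ((η₀ : ℂ) + (Δ : ℂ) * Complex.I) (by simp [hΔ.le]))
  have hgc := LorentzHelper.g_continuous hΔ η₀
  have hgnn : ∀ x : ℝ, 0 ≤ LorentzHelper.g Δ η₀ x := fun x => by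
    unfold LorentzHelper.g; positivity
  -- limit of the left-hand side as ε → 0⁺
  have h1 : Filter.Tendsto
      (fun ε : ℝ => ∫ η : ℝ, LorentzHelper.g Δ η₀ η • F ((η : ℂ) + (ε : ℂ) * Complex.I))
      (nhdsWithin 0 (Set.Ioi 0))
      (𝓝 (∫ η : ℝ, LorentzHelper.g Δ η₀ η • F (η : ℂ))) := by
    apply MeasureTheory.tendsto_integral_filter_of_dominated_convergence
      (fun η => LorentzHelper.g Δ η₀ η * C)
    · filter_upwards [self_mem_nhdsWithin] with ε hε
      have hε' : 0 < ε := hε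
      have hcF : Continuous fun η : ℝ => F ((η : ℂ) + (ε : ℂ) * Complex.I) := by
        apply hFcont.comp_continuous (by fun_prop)
        intro x
        simp only [Set.mem_setOf_eq, Complex.add_im, Complex.ofReal_im]
        simp [hε'.le]
      exact (hgc.smul hcF).aestronglyMeasurable
    · filter_upwards [self_mem_nhdsWithin] with ε hε
      have hε' : 0 < ε := hε
      filter_upwards with η
      rw [norm_smul, Real.norm_eq_abs, _root_.abs_of_nonneg (hgnn η)]
      refine mul_le_mul_of_nonneg_left (hC _ ?_) (hgnn η)
      simp only [Complex.add_im, Complex.ofReal_im]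
      simp [hε'.le]
    · exact (LorentzHelper.g_integrable hΔ η₀).mul_const C
    · filter_upwards with η
      have htend : Filter.Tendsto (fun ε : ℝ => (η : ℂ) + (ε : ℂ) * Complex.I)
          (nhdsWithin 0 (Set.Ioi 0)) (nhdsWithin (η : ℂ) {z : ℂ | 0 ≤ z.im}) := by
        rw [tendsto_nhdsWithin_iff]
        constructor
        · have hc : Filter.Tendsto (fun ε : ℝ => (η : ℂ) + (ε : ℂ) * Complex.I)
              (𝓝 0) (𝓝 ((η : ℂ) + ((0:ℝ) : ℂ) * Complex.I)) := by
            apply Continuous.tendsto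
            fun_prop
          simp only [Complex.ofReal_zero, zero_mul, add_zero] at hc
          exact hc.mono_left nhdsWithin_le_nhds
        · filter_upwards [self_mem_nhdsWithin] with ε hε
          have hε' : (0:ℝ) < ε := hε
          simp only [Set.mem_setOf_eq, Complex.add_im, Complex.ofReal_im]
          simp [hε'.le]
      exact Filter.Tendsto.const_smul
        ((hFcont (η : ℂ) (by simp)).tendsto.comp htend) _
  -- limit of the right-hand side as ε → 0⁺
  have h2 : Filter.Tendsto
      (fun ε : ℝ => F ((η₀ : ℂ) + ((Δ + ε : ℝ) : ℂ) * Complex.I))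
      (nhdsWithin 0 (Set.Ioi 0)) (𝓝 (F ((η₀ : ℂ) + (Δ : ℂ) * Complex.I))) := by
    have hopen : IsOpen {z : ℂ | 0 < z.im} := isOpen_lt continuous_const Complex.continuous_im
    have hmem : ((η₀ : ℂ) + (Δ : ℂ) * Complex.I) ∈ {z : ℂ | 0 < z.im} := by
      simp [hΔ]
    have hconF : ContinuousAt F ((η₀ : ℂ) + (Δ : ℂ) * Complex.I) :=
      (hFhol.differentiableAt (hopen.mem_nhds hmem)).continuousAt
    have hc : Filter.Tendsto (fun ε : ℝ => (η₀ : ℂ) + ((Δ + ε : ℝ) : ℂ) * Complex.I)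
        (𝓝 0) (𝓝 ((η₀ : ℂ) + ((Δ + 0 : ℝ) : ℂ) * Complex.I)) := by
      apply Continuous.tendsto
      fun_prop
    simp only [add_zero] at hc
    exact hconF.tendsto.comp (hc.mono_left nhdsWithin_le_nhds)
  have heq : (fun ε : ℝ => ∫ η : ℝ, LorentzHelper.g Δ η₀ η • F ((η : ℂ) + (ε : ℂ) * Complex.I))
      =ᶠ[nhdsWithin 0 (Set.Ioi 0)]
      (fun ε : ℝ => F ((η₀ : ℂ) + ((Δ + ε : ℝ) : ℂ) * Complex.I)) := by
    filter_upwards [self_mem_nhdsWithin] with ε hε using key ε hε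
  have hfinal : (∫ η : ℝ, LorentzHelper.g Δ η₀ η • F (η : ℂ))
      = F ((η₀ : ℂ) + (Δ : ℂ) * Complex.I) :=
    tendsto_nhds_unique h1 (h2.congr' heq.symm)
  simpa [LorentzHelper.g] using hfinal
end
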